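/- Substituting u = (y+ρ)/(ρy+1), where ρ = (-1+√(-3))/2 is a primitive cube root of unity, into the rational function t(u) = ρ^{-1}(w(u)^3 + 9·w(u) - 6) with w(u) = 3√(-3)·u·(-u^2-ρ^{-1})/(u^3-ρ^{-1}) + √(-3), yields t = -3(y^3+3y^2-6y+4)(y^3+3y^2+3y+4)(5y^3-3y^2-3y+2)/(y^3-3y+1)^3 as an identity of rational functions over Q(√(-3)). -/

import Mathlib

open RatFunc

set_option maxHeartbeats 2000000 in
set_option maxRecDepth 100000 in
theorem parametrization_in_y (F : Type*) [Field F] [CharZero F] (s : F) (hs : s ^ 2 = -3) :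
    let ρ : F := (-1 + s) / 2
    let y : RatFunc F := RatFunc.X
    let u : RatFunc F := (y + RatFunc.C ρ) / (RatFunc.C ρ * y + 1)
    let w : RatFunc F :=
      3 * RatFunc.C s * u * (-u ^ 2 - (RatFunc.C ρ)⁻¹) / (u ^ 3 - (RatFunc.C ρ)⁻¹) + RatFunc.C s
    (RatFunc.C ρ)⁻¹ * (w ^ 3 + 9 * w - 6) =
      -3 * (y ^ 3 + 3 * y ^ 2 - 6 * y + 4) * (y ^ 3 + 3 * y ^ 2 + 3 * y + 4) *
        (5 * y ^ 3 - 3 * y ^ 2 - 3 * y + 2) / (y ^ 3 - 3 * y + 1) ^ 3 := by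
  intro ρ y u w
  have hρdef : ρ = (-1 + s) / 2 := rfl
  have hrelF : ρ ^ 2 + ρ + 1 = 0 := by rw [hρdef]; linear_combination hs / 4
  have hsρ : RatFunc.C s = 2 * RatFunc.C ρ + 1 := by
    rw [show s = 2 * ρ + 1 by rw [hρdef]; ring]
    simp [map_add, map_mul, map_ofNat]
  have hρ0 : ρ ≠ 0 := by intro h; rw [h] at hrelF; norm_num at hrelF
  have hρ1 : ρ ≠ 1 := by intro h; rw [h] at hrelF; norm_num at hrelF
  have hrel : (RatFunc.C ρ) ^ 2 + RatFunc.C ρ + 1 = 0 := by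
    have h := congrArg (RatFunc.C (K := F)) hrelF
    simpa using h
  have hCρ0 : (RatFunc.C ρ : RatFunc F) ≠ 0 := by simpa using hρ0
  have hCρ1 : (RatFunc.C ρ : RatFunc F) - 1 ≠ 0 :=
    sub_ne_zero.mpr fun h => hρ1 ((RingHom.injective (RatFunc.C (K := F)))
      (by rw [h, map_one]))
  have key : ∀ p : Polynomial F, Polynomial.coeff p 0 ≠ 0 →
      (algebraMap (Polynomial F) (RatFunc F)) p ≠ 0 :=
    fun p hp => RatFunc.algebraMap_ne_zero (fun h => hp (by rw [h]; simp))
  have h1 : RatFunc.C ρ * (RatFunc.X : RatFunc F) + 1 ≠ 0 := by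
    have h := key (Polynomial.C ρ * Polynomial.X + 1) (by simp)
    simpa using h
  have hden : ((RatFunc.X : RatFunc F)) ^ 3 - 3 * RatFunc.X + 1 ≠ 0 := by
    have h := key (Polynomial.X ^ 3 - 3 * Polynomial.X + 1) (by simp)
    simpa [map_ofNat] using h
  have hu : u = (y + RatFunc.C ρ) / (RatFunc.C ρ * y + 1) := rfl
  have hy : y = RatFunc.X := rfl
  have hu3eq : u ^ 3 - (RatFunc.C ρ)⁻¹ =
      (RatFunc.C ρ - 1) * (y ^ 3 - 3 * y + 1) / (RatFunc.C ρ * (RatFunc.C ρ * y + 1) ^ 3) := by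
    rw [hu, hy]
    field_simp
    have h3 : ((RatFunc.X : RatFunc F) * RatFunc.C ρ + 1) ^ 3 ≠ 0 := pow_ne_zero 3 (by rw [mul_comm]; exact h1)
    rw [div_sub_one h3, div_left_inj' h3]
    linear_combination (RatFunc.C ρ - 1) * (RatFunc.C ρ - RatFunc.X ^ 3 + 3 * RatFunc.X) * hrel
  have hw : w = 3 * RatFunc.C s * u * (-u ^ 2 - (RatFunc.C ρ)⁻¹) / (u ^ 3 - (RatFunc.C ρ)⁻¹)
      + RatFunc.C s := rfl
  have hAeq : 3 * RatFunc.C s * u * (-u ^ 2 - (RatFunc.C ρ)⁻¹) =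
      (-3 * (2 * RatFunc.C ρ + 1) * (y + RatFunc.C ρ) *
        (RatFunc.C ρ * (y + RatFunc.C ρ) ^ 2 + (RatFunc.C ρ * y + 1) ^ 2)) /
      (RatFunc.C ρ * (RatFunc.C ρ * y + 1) ^ 3) := by
    rw [hu, hy, hsρ]
    field_simp
    ring
  have hwfull : w = (-3 * (2 * RatFunc.C ρ + 1) * (y + RatFunc.C ρ) *
        (RatFunc.C ρ * (y + RatFunc.C ρ) ^ 2 + (RatFunc.C ρ * y + 1) ^ 2)) /
        ((RatFunc.C ρ - 1) * (y ^ 3 - 3 * y + 1)) + (2 * RatFunc.C ρ + 1) := by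
    rw [hw, hAeq, hu3eq, hsρ,
      div_div_div_cancel_right₀ (mul_ne_zero hCρ0 (pow_ne_zero 3 (hy ▸ h1)))]
  rw [hwfull, hy]
  have hD : (RatFunc.C ρ - 1) * ((RatFunc.X : RatFunc F) ^ 3 - 3 * RatFunc.X + 1) ≠ 0 :=
    mul_ne_zero hCρ1 hden
  have hD3 : (RatFunc.X : RatFunc F) * (RatFunc.X ^ 2 - 3) + 1 ≠ 0 := by convert hden using 1; ring
  field_simp
  linear_combination ((-4:RatFunc F) + (81:RatFunc F) * RatFunc.X^2 + (-174:RatFunc F) * RatFunc.X^3 + (81:RatFunc F) * RatFunc.X^5 + (-12:RatFunc F) * RatFunc.X^6 + (-4:RatFunc F) * RatFunc.X^9 + (-140:RatFunc F) * RatFunc.C ρ^1 + (450:RatFunc F) * RatFunc.C ρ^1 * RatFunc.X^1 + (-639:RatFunc F) * RatFunc.C ρ^1 * RatFunc.X^2 + (309:RatFunc F) * RatFunc.C ρ^1 * RatFunc.X^3 + (171:RatFunc F) * RatFunc.C ρ^1 * RatFunc.X^4 + (-792:RatFunc F) * RatFunc.C ρ^1 * RatFunc.X^5 + (309:RatFunc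 F) * RatFunc.C ρ^1 * RatFunc.X^6 + (207:RatFunc F) * RatFunc.C ρ^1 * RatFunc.X^7 + (-153:RatFunc F) * RatFunc.C ρ^1 * RatFunc.X^8 + (-59:RatFunc F) * RatFunc.C ρ^1 * RatFunc.X^9 + (417:RatFunc F) * RatFunc.C ρ^2 + (-1584:RatFunc F) * RatFunc.C ρ^2 * RatFunc.X^1 + (1296:RatFunc F) * RatFunc.C ρ^2 * RatFunc.X^2 + (54:RatFunc F) * RatFunc.C ρ^2 * RatFunc.X^3 + (-2385:RatFunc F) * RatFunc.C ρ^2 * RatFunc.X^4 + (1161:RatFunc F) * RatFunc.C ρ^2 * RatFunc.X^5 + (-387:RatFunc F) * RatFunc.C ρ^2 * RatFunc.X^6 + (-558:RatFunc F) * RatFunc.C ρ^2 * RatFunc.X^7 + (108:RatFunc F) * RatFunc.C ρ^2 * RatFunc.X^8 + (57:RatFunc F) * RatFunc.C ρ^2 * RatFunc.X^9 + (-695:RatFunc F) * RatFunc.C ρ^3 + (1053:RatFunc F) * RatFunc.C ρ^3 * RatFunc.X^1 + (-1683:RatFunc F) * RatFunc.C ρ^3 * RatFunc.X^2 + (-3624:RatFunc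 F) * RatFunc.C ρ^3 * RatFunc.X^3 + (1134:RatFunc F) * RatFunc.C ρ^3 * RatFunc.X^4 + (-2934:RatFunc F) * RatFunc.C ρ^3 * RatFunc.X^5 + (-2409:RatFunc F) * RatFunc.C ρ^3 * RatFunc.X^6 + (-1701:RatFunc F) * RatFunc.C ρ^3 * RatFunc.X^7 + (-1170:RatFunc F) * RatFunc.C ρ^3 * RatFunc.X^8 + (-263:RatFunc F) * RatFunc.C ρ^3 * RatFunc.X^9 + (62:RatFunc F) * RatFunc.C ρ^4 + (-909:RatFunc F) * RatFunc.C ρ^4 * RatFunc.X^1 + (-5085:RatFunc F) * RatFunc.C ρ^4 * RatFunc.X^2 + (-3801:RatFunc F) * RatFunc.C ρ^4 * RatFunc.X^3 + (-8757:RatFunc F) * RatFunc.C ρ^4 * RatFunc.X^4 + (-9792:RatFunc F) * RatFunc.C ρ^4 * RatFunc.X^5 + (-8490:RatFunc F) * RatFunc.C ρ^4 * RatFunc.X^6 + (-5985:RatFunc F) * RatFunc.C ρ^4 * RatFunc.X^7 + (-2358:RatFunc F) * RatFunc.C ρ^4 * RatFunc.X^8 + (-361:RatFunc F) * RatFunc.C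 ρ^4 * RatFunc.X^9 + (351:RatFunc F) * RatFunc.C ρ^5 + (-3303:RatFunc F) * RatFunc.C ρ^5 * RatFunc.X^1 + (-4131:RatFunc F) * RatFunc.C ρ^5 * RatFunc.X^2 + (-13005:RatFunc F) * RatFunc.C ρ^5 * RatFunc.X^3 + (-25533:RatFunc F) * RatFunc.C ρ^5 * RatFunc.X^4 + (-25029:RatFunc F) * RatFunc.C ρ^5 * RatFunc.X^5 + (-23067:RatFunc F) * RatFunc.C ρ^5 * RatFunc.X^6 + (-14616:RatFunc F) * RatFunc.C ρ^5 * RatFunc.X^7 + (-4617:RatFunc F) * RatFunc.C ρ^5 * RatFunc.X^8 + (-558:RatFunc F) * RatFunc.C ρ^5 * RatFunc.X^9 + (-756:RatFunc F) * RatFunc.C ρ^6 + (-864:RatFunc F) * RatFunc.C ρ^6 * RatFunc.X^1 + (-6903:RatFunc F) * RatFunc.C ρ^6 * RatFunc.X^2 + (-28512:RatFunc F) * RatFunc.C ρ^6 * RatFunc.X^3 + (-35829:RatFunc F) * RatFunc.C ρ^6 * RatFunc.X^4 + (-48312:RatFunc F) * RatFunc.C ρ^6 * RatFunc.X^5 +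 (-44901:RatFunc F) * RatFunc.C ρ^6 * RatFunc.X^6 + (-22329:RatFunc F) * RatFunc.C ρ^6 * RatFunc.X^7 + (-5526:RatFunc F) * RatFunc.C ρ^6 * RatFunc.X^8 + (-540:RatFunc F) * RatFunc.C ρ^6 * RatFunc.X^9 + (-369:RatFunc F) * RatFunc.C ρ^7 + (-567:RatFunc F) * RatFunc.C ρ^7 * RatFunc.X^1 + (-15876:RatFunc F) * RatFunc.C ρ^7 * RatFunc.X^2 + (-24822:RatFunc F) * RatFunc.C ρ^7 * RatFunc.X^3 + (-50490:RatFunc F) * RatFunc.C ρ^7 * RatFunc.X^4 + (-70605:RatFunc F) * RatFunc.C ρ^7 * RatFunc.X^5 + (-49617:RatFunc F) * RatFunc.C ρ^7 * RatFunc.X^6 + (-17766:RatFunc F) * RatFunc.C ρ^7 * RatFunc.X^7 + (-3132:RatFunc F) * RatFunc.C ρ^7 * RatFunc.X^8 + (-216:RatFunc F) * RatFunc.C ρ^7 * RatFunc.X^9 + (378:RatFunc F) * RatFunc.C ρ^8 + (-5049:RatFunc F) * RatFunc.C ρ^8 * RatFunc.X^1 + (-9531:RatFunc F) * RatFunc.C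 ρ^8 * RatFunc.X^2 + (-26811:RatFunc F) * RatFunc.C ρ^8 * RatFunc.X^3 + (-63477:RatFunc F) * RatFunc.C ρ^8 * RatFunc.X^4 + (-60318:RatFunc F) * RatFunc.C ρ^8 * RatFunc.X^5 + (-27918:RatFunc F) * RatFunc.C ρ^8 * RatFunc.X^6 + (-6588:RatFunc F) * RatFunc.C ρ^8 * RatFunc.X^7 + (-648:RatFunc F) * RatFunc.C ρ^8 * RatFunc.X^8 + (-513:RatFunc F) * RatFunc.C ρ^9 + (-2673:RatFunc F) * RatFunc.C ρ^9 * RatFunc.X^1 + (-6291:RatFunc F) * RatFunc.C ρ^9 * RatFunc.X^2 + (-35586:RatFunc F) * RatFunc.C ρ^9 * RatFunc.X^3 + (-45198:RatFunc F) * RatFunc.C ρ^9 * RatFunc.X^4 + (-25164:RatFunc F) * RatFunc.C ρ^9 * RatFunc.X^5 + (-6588:RatFunc F) * RatFunc.C ρ^9 * RatFunc.X^6 + (-648:RatFunc F) * RatFunc.C ρ^9 * RatFunc.X^7 + (-513:RatFunc F) * RatFunc.C ρ^10 + (162:RatFunc F) * RatFunc.C ρ^10 * RatFunc.X^1 + (-12474:RatFunc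 F) * RatFunc.C ρ^10 * RatFunc.X^2 + (-22788:RatFunc F) * RatFunc.C ρ^10 * RatFunc.X^3 + (-13932:RatFunc F) * RatFunc.C ρ^10 * RatFunc.X^4 + (-3240:RatFunc F) * RatFunc.C ρ^10 * RatFunc.X^5 + (-216:RatFunc F) * RatFunc.C ρ^10 * RatFunc.X^6 + (162:RatFunc F) * RatFunc.C ρ^11 + (-2268:RatFunc F) * RatFunc.C ρ^11 * RatFunc.X^1 + (-8100:RatFunc F) * RatFunc.C ρ^11 * RatFunc.X^2 + (-4536:RatFunc F) * RatFunc.C ρ^11 * RatFunc.X^3 + (-648:RatFunc F) * RatFunc.C ρ^11 * RatFunc.X^4 + (-108:RatFunc F) * RatFunc.C ρ^12 + (-1944:RatFunc F) * RatFunc.C ρ^12 * RatFunc.X^1 + (-648:RatFunc F) * RatFunc.C ρ^12 * RatFunc.X^2 + (-216:RatFunc F) * RatFunc.C ρ^13) * hrel
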